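/- Let Λ, β, α, μ₁, μ₂, d₁, d₂ > 0, θ ∈ ℝ, c > 0, and let (S*, I*) be a positive endemic equilibrium, i.e. S* > 0, I* > 0, Λ = βS*I*/(1 + αI*) + μ₁S* and βS*I*/(1 + αI*) = μ₂I*. Suppose S, I : ℝ → ℝ are differentiable with S(ξ) > 0 and I(ξ) > 0 for all ξ, solving the traveling-wave system cS'(ξ) = d₁𝔍[S](ξ) + Λ − βS(ξ)I(ξ)/(1 + αI(ξ)) − μ₁S(ξ), cI'(ξ) = d₂𝔍[I](ξ) + βS(ξ)I(ξ)/(1 + αI(ξ)) − μ₂I(ξ). With g(x) = x − 1 − ln x, define L(ξ) = cS*g(S(ξ)/S*) + cI*g(I(ξ)/I*) + d₁S*(V₁(ξ) + V₂(ξ)) + d₂I*(U₁(ξ) + U₂(ξ)), where V₁(ξ) = ∫₀^{sin θ} g(S(ξ − ς)/S*) dς − ∫_{−sin θ}^{0} g(S(ξ − ς)/S*) dς, V₂ is defined analogously with cos θ, and U₁, U₂ are defined analogously with I and I* in place of S and S*. Then L is differentiable and L'(ξ) ≤ 0 for every ξ ∈ ℝ. -/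

import Mathlib

/-- Discrete Laplacian in direction `θ`. -/
noncomputable def lap (θ : ℝ) (φ : ℝ → ℝ) (ξ : ℝ) : ℝ :=
  φ (ξ + Real.sin θ) + φ (ξ - Real.sin θ) + φ (ξ + Real.cos θ) + φ (ξ - Real.cos θ) - 4 * φ ξ

/-- The Volterra–Lyapunov function `g(x) = x − 1 − ln x`. -/
noncomputable def volterraG (x : ℝ) : ℝ := x - 1 - Real.log x

lemma keyg (u v : ℝ) (hu : 0 < u) (hv : 0 < v) :
    (1 - 1/u) * (v - u) + (volterraG u - volterraG v) ≤ 0 := by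
  have h := Real.log_le_sub_one_of_pos (div_pos hv hu)
  rw [Real.log_div hv.ne' hu.ne'] at h
  simp only [volterraG]
  have hu' : u ≠ 0 := hu.ne'
  have e : (1 - 1/u) * (v - u) + ((u - 1 - Real.log u) - (v - 1 - Real.log v))
      = (Real.log v - Real.log u) - (v/u - 1) := by field_simp; ring
  linarith [e.le, e.ge]

lemma keyg' (Ss u v : ℝ) (hSs : 0 < Ss) (hu : 0 < u) (hv : 0 < v) :
    (1 - Ss/u) * (v - u) + Ss * (volterraG (u/Ss) - volterraG (v/Ss)) ≤ 0 := by
  have h := keyg (u/Ss) (v/Ss) (div_pos hu hSs) (div_pos hv hSs)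
  have e : (1 - Ss/u) * (v - u) + Ss * (volterraG (u/Ss) - volterraG (v/Ss))
      = Ss * ((1 - 1/(u/Ss)) * (v/Ss - u/Ss) + (volterraG (u/Ss) - volterraG (v/Ss))) := by
    rw [one_div_div]
    field_simp
  rw [e]
  exact mul_nonpos_of_nonneg_of_nonpos hSs.le h

lemma amgm (u v w : ℝ) (hu : 0 < u) (hv : 0 < v) (hw : 0 < w) :
    3*u*v*w ≤ u^2*w + u*v^2 + v*w^2 := by
  nlinarith [mul_nonneg hw.le (sq_nonneg (u-v)), mul_nonneg hu.le (sq_nonneg (v-w)),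
    mul_nonneg hv.le (sq_nonneg (w-u)), mul_nonneg hv.le (sq_nonneg (u-w)),
    mul_nonneg hu.le (sq_nonneg (u-v)), mul_nonneg hw.le (sq_nonneg (v-w)),
    mul_pos hu hv, mul_pos hv hw, mul_pos hu hw]

set_option maxHeartbeats 1000000 in
lemma local_nonpos (β α μ₁ μ₂ : ℝ) (hβ : 0 < β) (hα : 0 < α) (hμ₁ : 0 < μ₁)
    (Sstar Istar s i : ℝ) (hSs : 0 < Sstar) (hIs : 0 < Istar) (hs : 0 < s) (hi : 0 < i)
    (heq2 : β * Sstar * Istar / (1 + α * Istar) = μ₂ * Istar) :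
    (1 - Sstar/s) * ((β * Sstar * Istar / (1 + α * Istar) + μ₁ * Sstar)
        - β * s * i / (1 + α * i) - μ₁ * s)
      + (1 - Istar/i) * (β * s * i / (1 + α * i) - μ₂ * i) ≤ 0 := by
  have hp : (0:ℝ) < 1 + α * i := by positivity
  have hps : (0:ℝ) < 1 + α * Istar := by positivity
  have hμ₂ : μ₂ = β * Sstar / (1 + α * Istar) := by
    field_simp at heq2
    field_simp
    nlinarith [heq2]
  subst hμ₂
  have hE : 0 ≤ s^2*Istar^2 + i*Istar*Sstar^2 + s*Sstar*i^2 - 3*s*Sstar*i*Istar := by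
    have h := amgm (s*Istar) (Sstar*i) (s*i) (by positivity) (by positivity) (by positivity)
    have hsi : (0:ℝ) < s*i := by positivity
    nlinarith [h, hsi]
  have hD : (0:ℝ) < s * i * (1 + α * i) * (1 + α * Istar) := by positivity
  have key : ((1 - Sstar/s) * ((β * Sstar * Istar / (1 + α * Istar) + μ₁ * Sstar)
        - β * s * i / (1 + α * i) - μ₁ * s)
      + (1 - Istar/i) * (β * s * i / (1 + α * i) - β * Sstar / (1 + α * Istar) * i))
      * (s * i * (1 + α * i) * (1 + α * Istar))
      = -(μ₁ * i * (1 + α * i) * (1 + α * Istar) * (s - Sstar)^2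
          + β * i * (Istar * (s - Sstar)^2
            + α * (s^2*Istar^2 + i*Istar*Sstar^2 + s*Sstar*i^2 - 3*s*Sstar*i*Istar))) := by
    field_simp
    ring
  have hprod : ((1 - Sstar/s) * ((β * Sstar * Istar / (1 + α * Istar) + μ₁ * Sstar)
        - β * s * i / (1 + α * i) - μ₁ * s)
      + (1 - Istar/i) * (β * s * i / (1 + α * i) - β * Sstar / (1 + α * Istar) * i))
      * (s * i * (1 + α * i) * (1 + α * Istar)) ≤ 0 := by
    rw [key]
    have h1 : 0 ≤ μ₁ * i * (1 + α * i) * (1 + α * Istar) * (s - Sstar)^2 := by positivity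
    have h2 : 0 ≤ β * i * (Istar * (s - Sstar)^2
        + α * (s^2*Istar^2 + i*Istar*Sstar^2 + s*Sstar*i^2 - 3*s*Sstar*i*Istar)) := by
      apply mul_nonneg (by positivity)
      have h3 : 0 ≤ Istar * (s - Sstar)^2 := by positivity
      nlinarith [hα.le]
    linarith
  exact (mul_le_mul_iff_of_pos_right hD).mp (by linarith [hprod])

set_option maxHeartbeats 1600000 in
theorem stmt_16 (Λ β α μ₁ μ₂ d₁ d₂ θ c : ℝ)
    (hΛ : 0 < Λ) (hβ : 0 < β) (hα : 0 < α) (hμ₁ : 0 < μ₁) (hμ₂ : 0 < μ₂)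
    (hd₁ : 0 < d₁) (hd₂ : 0 < d₂) (hc : 0 < c)
    (Sstar Istar : ℝ) (hSstar : 0 < Sstar) (hIstar : 0 < Istar)
    (heq1 : Λ = β * Sstar * Istar / (1 + α * Istar) + μ₁ * Sstar)
    (heq2 : β * Sstar * Istar / (1 + α * Istar) = μ₂ * Istar)
    (S I : ℝ → ℝ)
    (hSdiff : Differentiable ℝ S) (hIdiff : Differentiable ℝ I)
    (hSpos : ∀ ξ : ℝ, 0 < S ξ) (hIpos : ∀ ξ : ℝ, 0 < I ξ)
    (hSeq : ∀ ξ : ℝ, c * deriv S ξ =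
      d₁ * lap θ S ξ + Λ - β * S ξ * I ξ / (1 + α * I ξ) - μ₁ * S ξ)
    (hIeq : ∀ ξ : ℝ, c * deriv I ξ =
      d₂ * lap θ I ξ + β * S ξ * I ξ / (1 + α * I ξ) - μ₂ * I ξ)
    (L : ℝ → ℝ)
    (hL : ∀ ξ : ℝ, L ξ =
      c * Sstar * volterraG (S ξ / Sstar) + c * Istar * volterraG (I ξ / Istar) +
      d₁ * Sstar *
        (((∫ ς in (0 : ℝ)..Real.sin θ, volterraG (S (ξ - ς) / Sstar)) -
          (∫ ς in (-Real.sin θ)..(0 : ℝ), volterraG (S (ξ - ς) / Sstar))) +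
         ((∫ ς in (0 : ℝ)..Real.cos θ, volterraG (S (ξ - ς) / Sstar)) -
          (∫ ς in (-Real.cos θ)..(0 : ℝ), volterraG (S (ξ - ς) / Sstar)))) +
      d₂ * Istar *
        (((∫ ς in (0 : ℝ)..Real.sin θ, volterraG (I (ξ - ς) / Istar)) -
          (∫ ς in (-Real.sin θ)..(0 : ℝ), volterraG (I (ξ - ς) / Istar))) +
         ((∫ ς in (0 : ℝ)..Real.cos θ, volterraG (I (ξ - ς) / Istar)) -
          (∫ ς in (-Real.cos θ)..(0 : ℝ), volterraG (I (ξ - ς) / Istar))))) :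
    Differentiable ℝ L ∧ ∀ ξ : ℝ, deriv L ξ ≤ 0 := by
  set a := Real.sin θ with ha
  set b := Real.cos θ with hb
  set FS : ℝ → ℝ := fun u => volterraG (S u / Sstar) with hFS
  set FI : ℝ → ℝ := fun u => volterraG (I u / Istar) with hFI
  have hFScont : Continuous FS := by
    simp only [hFS, volterraG]
    have h1 : Continuous fun u => S u / Sstar := hSdiff.continuous.div_const _
    exact (h1.sub continuous_const).sub
      (h1.log fun u => (div_pos (hSpos u) hSstar).ne')
  have hFIcont : Continuous FI := by
    simp only [hFI, volterraG]
    have h1 : Continuous fun u => I u / Istar := hIdiff.continuous.div_const _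
    exact (h1.sub continuous_const).sub
      (h1.log fun u => (div_pos (hIpos u) hIstar).ne')
  set ΦS : ℝ → ℝ := fun t => ∫ x in (0:ℝ)..t, FS x with hΦSdef
  set ΦI : ℝ → ℝ := fun t => ∫ x in (0:ℝ)..t, FI x with hΦIdef
  have hΦS : ∀ t, HasDerivAt ΦS (FS t) t := fun t =>
    intervalIntegral.integral_hasDerivAt_right (hFScont.intervalIntegrable _ _)
      (hFScont.stronglyMeasurableAtFilter MeasureTheory.volume _) hFScont.continuousAt
  have hΦI : ∀ t, HasDerivAt ΦI (FI t) t := fun t =>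
    intervalIntegral.integral_hasDerivAt_right (hFIcont.intervalIntegrable _ _)
      (hFIcont.stronglyMeasurableAtFilter MeasureTheory.volume _) hFIcont.continuousAt
  -- rewrite the integral terms
  have hint : ∀ (F : ℝ → ℝ) (Φ : ℝ → ℝ), Continuous F → (Φ = fun t => ∫ x in (0:ℝ)..t, F x) →
      ∀ (ξ r : ℝ), (∫ ς in (0:ℝ)..r, F (ξ - ς)) = Φ ξ - Φ (ξ - r) := by
    intro F Φ hF hΦ ξ r
    rw [intervalIntegral.integral_comp_sub_left F ξ, hΦ]
    have h := intervalIntegral.integral_add_adjacent_intervals (μ := MeasureTheory.volume)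
      (hF.intervalIntegrable 0 (ξ - r)) (hF.intervalIntegrable (ξ - r) ξ)
    simp only [sub_zero]
    linarith [h]
  have hint2 : ∀ (F : ℝ → ℝ) (Φ : ℝ → ℝ), Continuous F → (Φ = fun t => ∫ x in (0:ℝ)..t, F x) →
      ∀ (ξ r : ℝ), (∫ ς in (-r)..(0:ℝ), F (ξ - ς)) = Φ (ξ + r) - Φ ξ := by
    intro F Φ hF hΦ ξ r
    rw [intervalIntegral.integral_comp_sub_left F ξ, hΦ]
    have h := intervalIntegral.integral_add_adjacent_intervals (μ := MeasureTheory.volume)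
      (hF.intervalIntegrable 0 ξ) (hF.intervalIntegrable ξ (ξ + r))
    simp only [sub_zero, sub_neg_eq_add]
    linarith [h]
  -- closed form for L
  have hL' : L = fun ξ => c * Sstar * FS ξ + c * Istar * FI ξ
      + d₁ * Sstar * (4 * ΦS ξ - ΦS (ξ - a) - ΦS (ξ + a) - ΦS (ξ - b) - ΦS (ξ + b))
      + d₂ * Istar * (4 * ΦI ξ - ΦI (ξ - a) - ΦI (ξ + a) - ΦI (ξ - b) - ΦI (ξ + b)) := by
    funext ξ
    rw [hL ξ]
    rw [hint FS ΦS hFScont hΦSdef ξ a, hint FS ΦS hFScont hΦSdef ξ b,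
      hint2 FS ΦS hFScont hΦSdef ξ a, hint2 FS ΦS hFScont hΦSdef ξ b,
      hint FI ΦI hFIcont hΦIdef ξ a, hint FI ΦI hFIcont hΦIdef ξ b,
      hint2 FI ΦI hFIcont hΦIdef ξ a, hint2 FI ΦI hFIcont hΦIdef ξ b]
    simp only [hFS, hFI]
    ring
  -- derivative of the pointwise g-terms
  have hgS : ∀ ξ : ℝ, HasDerivAt (fun t => FS t)
      ((1/Sstar - 1/(S ξ)) * deriv S ξ) ξ := by
    intro ξ
    have hS := (hSdiff ξ).hasDerivAt
    have h1 : HasDerivAt (fun t => S t / Sstar) (deriv S ξ / Sstar) ξ := hS.div_const _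
    have h2 : HasDerivAt (fun t => Real.log (S t / Sstar))
        ((deriv S ξ / Sstar) / (S ξ / Sstar)) ξ := h1.log (div_pos (hSpos ξ) hSstar).ne'
    have h3 := (h1.sub_const 1).sub h2
    have e : deriv S ξ / Sstar - (deriv S ξ / Sstar) / (S ξ / Sstar)
        = (1/Sstar - 1/(S ξ)) * deriv S ξ := by
      have := (hSpos ξ).ne'
      field_simp
    rw [e] at h3
    simpa only [hFS, volterraG, Pi.sub_def] using h3
  have hgI : ∀ ξ : ℝ, HasDerivAt (fun t => FI t)
      ((1/Istar - 1/(I ξ)) * deriv I ξ) ξ := by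
    intro ξ
    have hI := (hIdiff ξ).hasDerivAt
    have h1 : HasDerivAt (fun t => I t / Istar) (deriv I ξ / Istar) ξ := hI.div_const _
    have h2 : HasDerivAt (fun t => Real.log (I t / Istar))
        ((deriv I ξ / Istar) / (I ξ / Istar)) ξ := h1.log (div_pos (hIpos ξ) hIstar).ne'
    have h3 := (h1.sub_const 1).sub h2
    have e : deriv I ξ / Istar - (deriv I ξ / Istar) / (I ξ / Istar)
        = (1/Istar - 1/(I ξ)) * deriv I ξ := by
      have := (hIpos ξ).ne'
      field_simp
    rw [e] at h3
    simpa only [hFI, volterraG, Pi.sub_def] using h3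
  -- shifted Φ derivatives
  have hshift : ∀ (Φ F : ℝ → ℝ), (∀ t, HasDerivAt Φ (F t) t) → ∀ (r ξ : ℝ),
      HasDerivAt (fun t => Φ (t - r)) (F (ξ - r)) ξ := by
    intro Φ F hΦ r ξ
    have := (hΦ (ξ - r)).comp ξ ((hasDerivAt_id ξ).sub_const r)
    simpa [Function.comp_def] using this
  have hshift' : ∀ (Φ F : ℝ → ℝ), (∀ t, HasDerivAt Φ (F t) t) → ∀ (r ξ : ℝ),
      HasDerivAt (fun t => Φ (t + r)) (F (ξ + r)) ξ := by
    intro Φ F hΦ r ξ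
    have := (hΦ (ξ + r)).comp ξ ((hasDerivAt_id ξ).add_const r)
    simpa [Function.comp_def] using this
  -- total derivative
  have hLderiv : ∀ ξ : ℝ, HasDerivAt L
      (c * Sstar * ((1/Sstar - 1/(S ξ)) * deriv S ξ)
        + c * Istar * ((1/Istar - 1/(I ξ)) * deriv I ξ)
        + d₁ * Sstar * (4 * FS ξ - FS (ξ - a) - FS (ξ + a) - FS (ξ - b) - FS (ξ + b))
        + d₂ * Istar * (4 * FI ξ - FI (ξ - a) - FI (ξ + a) - FI (ξ - b) - FI (ξ + b))) ξ := by
    intro ξ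
    rw [hL']
    exact ((((hgS ξ).const_mul (c * Sstar)).add ((hgI ξ).const_mul (c * Istar))).add
        (((((((hΦS ξ).const_mul 4).sub (hshift ΦS FS hΦS a ξ)).sub
          (hshift' ΦS FS hΦS a ξ)).sub (hshift ΦS FS hΦS b ξ)).sub
          (hshift' ΦS FS hΦS b ξ)).const_mul (d₁ * Sstar))).add
        (((((((hΦI ξ).const_mul 4).sub (hshift ΦI FI hΦI a ξ)).sub
          (hshift' ΦI FI hΦI a ξ)).sub (hshift ΦI FI hΦI b ξ)).sub
          (hshift' ΦI FI hΦI b ξ)).const_mul (d₂ * Istar))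
  constructor
  · exact fun ξ => (hLderiv ξ).differentiableAt
  · intro ξ
    rw [(hLderiv ξ).deriv]
    -- rewrite the c-terms using the equations
    have e1 : c * Sstar * ((1/Sstar - 1/(S ξ)) * deriv S ξ)
        = (1 - Sstar / S ξ) * (c * deriv S ξ) := by
      have := (hSpos ξ).ne'
      field_simp
    have e2 : c * Istar * ((1/Istar - 1/(I ξ)) * deriv I ξ)
        = (1 - Istar / I ξ) * (c * deriv I ξ) := by
      have := (hIpos ξ).ne'
      field_simp
    rw [e1, e2, hSeq ξ, hIeq ξ]
    -- laplacian terms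
    have hTS : (1 - Sstar / S ξ) * lap θ S ξ
        + Sstar * (4 * FS ξ - FS (ξ - a) - FS (ξ + a) - FS (ξ - b) - FS (ξ + b)) ≤ 0 := by
      have h1 := keyg' Sstar (S ξ) (S (ξ + a)) hSstar (hSpos ξ) (hSpos _)
      have h2 := keyg' Sstar (S ξ) (S (ξ - a)) hSstar (hSpos ξ) (hSpos _)
      have h3 := keyg' Sstar (S ξ) (S (ξ + b)) hSstar (hSpos ξ) (hSpos _)
      have h4 := keyg' Sstar (S ξ) (S (ξ - b)) hSstar (hSpos ξ) (hSpos _)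
      simp only [lap, hFS]
      linarith [h1, h2, h3, h4]
    have hTI : (1 - Istar / I ξ) * lap θ I ξ
        + Istar * (4 * FI ξ - FI (ξ - a) - FI (ξ + a) - FI (ξ - b) - FI (ξ + b)) ≤ 0 := by
      have h1 := keyg' Istar (I ξ) (I (ξ + a)) hIstar (hIpos ξ) (hIpos _)
      have h2 := keyg' Istar (I ξ) (I (ξ - a)) hIstar (hIpos ξ) (hIpos _)
      have h3 := keyg' Istar (I ξ) (I (ξ + b)) hIstar (hIpos ξ) (hIpos _)
      have h4 := keyg' Istar (I ξ) (I (ξ - b)) hIstar (hIpos ξ) (hIpos _)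
      simp only [lap, hFI]
      linarith [h1, h2, h3, h4]
    have hLoc : (1 - Sstar / S ξ) * (Λ - β * S ξ * I ξ / (1 + α * I ξ) - μ₁ * S ξ)
        + (1 - Istar / I ξ) * (β * S ξ * I ξ / (1 + α * I ξ) - μ₂ * I ξ) ≤ 0 := by
      rw [heq1]
      have := local_nonpos β α μ₁ μ₂ hβ hα hμ₁ Sstar Istar (S ξ) (I ξ)
        hSstar hIstar (hSpos ξ) (hIpos ξ) heq2
      linarith [this]
    -- combine
    have hsplit : (1 - Sstar / S ξ) * (d₁ * lap θ S ξ + Λ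
          - β * S ξ * I ξ / (1 + α * I ξ) - μ₁ * S ξ)
        + (1 - Istar / I ξ) * (d₂ * lap θ I ξ + β * S ξ * I ξ / (1 + α * I ξ) - μ₂ * I ξ)
        + d₁ * Sstar * (4 * FS ξ - FS (ξ - a) - FS (ξ + a) - FS (ξ - b) - FS (ξ + b))
        + d₂ * Istar * (4 * FI ξ - FI (ξ - a) - FI (ξ + a) - FI (ξ - b) - FI (ξ + b))
        = d₁ * ((1 - Sstar / S ξ) * lap θ S ξ
            + Sstar * (4 * FS ξ - FS (ξ - a) - FS (ξ + a) - FS (ξ - b) - FS (ξ + b)))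
        + d₂ * ((1 - Istar / I ξ) * lap θ I ξ
            + Istar * (4 * FI ξ - FI (ξ - a) - FI (ξ + a) - FI (ξ - b) - FI (ξ + b)))
        + ((1 - Sstar / S ξ) * (Λ - β * S ξ * I ξ / (1 + α * I ξ) - μ₁ * S ξ)
          + (1 - Istar / I ξ) * (β * S ξ * I ξ / (1 + α * I ξ) - μ₂ * I ξ)) := by
      ring
    rw [hsplit]
    have t1 : d₁ * ((1 - Sstar / S ξ) * lap θ S ξ
        + Sstar * (4 * FS ξ - FS (ξ - a) - FS (ξ + a) - FS (ξ - b) - FS (ξ + b))) ≤ 0 :=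
      mul_nonpos_of_nonneg_of_nonpos hd₁.le hTS
    have t2 : d₂ * ((1 - Istar / I ξ) * lap θ I ξ
        + Istar * (4 * FI ξ - FI (ξ - a) - FI (ξ + a) - FI (ξ - b) - FI (ξ + b))) ≤ 0 :=
      mul_nonpos_of_nonneg_of_nonpos hd₂.le hTI
    linarith
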